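/- Approval Voting (AV) satisfies strong support monotonicity without population increase: if W is a winning AV committee for E containing a nonempty set G, and a voter i with A_i ∩ G = ∅ changes her ballot to A_i ∪ G, then some winning committee of the new election contains all of G; and if all winning committees of E contain G, then all winning committees of the new election contain G. -/
import Mathlib


open Finset

variable {C : Type*} [Fintype C] [DecidableEq C]

/-- The AV score of a committee `W`: the sum over voters of the number of
approved committee members (equivalently, the sum of the approval scores of
the members of `W`). -/
def avScore {V : Type*} [Fintype V] (A : V → Finset C) (W : Finset C) : ℕ :=
  ∑ i, ((A i ∩ W).card)

/-- `W` is a winning committee of Approval Voting for the election `(A, k)`. -/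
def isAVWinner {V : Type*} [Fintype V] (A : V → Finset C) (k : ℕ) (W : Finset C) : Prop :=
  W.card = k ∧ ∀ W' : Finset C, W'.card = k → avScore A W' ≤ avScore A W

lemma avScore_update {V : Type*} [Fintype V] [DecidableEq V]
    (A : V → Finset C) (G : Finset C) (i : V) (hiG : A i ∩ G = ∅) (X : Finset C) :
    avScore (Function.update A i (A i ∪ G)) X = avScore A X + (G ∩ X).card := by
  unfold avScore
  have hdisj : Disjoint (A i ∩ X) (G ∩ X) := by
    rw [Finset.disjoint_left]
    intro a ha hb
    have : a ∈ A i ∩ G := Finset.mem_inter.mpr ⟨(Finset.mem_inter.mp ha).1,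
      (Finset.mem_inter.mp hb).1⟩
    simp [hiG] at this
  have hcard : ((A i ∪ G) ∩ X).card = (A i ∩ X).card + (G ∩ X).card := by
    rw [Finset.union_inter_distrib_right, Finset.card_union_of_disjoint hdisj]
  have h1 : ∀ j, ((Function.update A i (A i ∪ G) j) ∩ X).card
      = Function.update (fun j => (A j ∩ X).card) i (((A i ∪ G) ∩ X).card) j := by
    intro j
    by_cases h : j = i <;> simp [Function.update_apply, h]
  rw [Finset.sum_congr rfl (fun j _ => h1 j),
    Finset.sum_update_of_mem (Finset.mem_univ i), hcard,
    Finset.sum_eq_add_sum_sdiff_singleton_of_mem (Finset.mem_univ i) (fun j => (A j ∩ X).card)]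
  ring

/-- AV satisfies strong support monotonicity without population increase. -/
theorem av_strong_SMWOPI {V : Type*} [Fintype V] [DecidableEq V]
    (A : V → Finset C) (k : ℕ) (hk : 1 ≤ k) (hkC : k ≤ Fintype.card C)
    (G : Finset C) (hG : G.Nonempty) (hGk : G.card ≤ k)
    (i : V) (hiG : A i ∩ G = ∅)
    (W : Finset C) (hW : isAVWinner A k W) (hGW : G ⊆ W) :
    (∃ W' : Finset C, isAVWinner (Function.update A i (A i ∪ G)) k W' ∧ G ⊆ W') ∧
    ((∀ W₀ : Finset C, isAVWinner A k W₀ → G ⊆ W₀) →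
      ∀ W' : Finset C, isAVWinner (Function.update A i (A i ∪ G)) k W' → G ⊆ W') := by
  have hGWcard : (G ∩ W).card = G.card := by
    rw [Finset.inter_eq_left.mpr hGW]
  have hWwin : isAVWinner (Function.update A i (A i ∪ G)) k W := by
    refine ⟨hW.1, fun X hX => ?_⟩
    rw [avScore_update A G i hiG, avScore_update A G i hiG, hGWcard]
    exact Nat.add_le_add (hW.2 X hX) (Finset.card_le_card Finset.inter_subset_left)
  constructor
  · exact ⟨W, hWwin, hGW⟩
  · intro _ W' hW'
    by_contra hnot
    obtain ⟨g, hgG, hgW'⟩ := Finset.not_subset.mp hnot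
    have hlt : (G ∩ W').card < G.card := by
      apply Finset.card_lt_card
      refine ⟨Finset.inter_subset_left, fun hsub => hgW' (Finset.mem_inter.mp (hsub hgG)).2⟩
    have h1 : avScore (Function.update A i (A i ∪ G)) W
        ≤ avScore (Function.update A i (A i ∪ G)) W' := hW'.2 W hW.1
    rw [avScore_update A G i hiG, avScore_update A G i hiG, hGWcard] at h1
    have h2 : avScore A W' ≤ avScore A W := hW.2 W' hW'.1
    omega
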